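/- arXiv:2304.14980 — 3 statements merged into one kernel-verified Lean document; each statement's English description precedes it below -/
import Mathlib

section
/- Let C be the set of candidates in an election and suppose C = I ∪ J is a partition of C such that (i) x ≥_{3/4} y for all x ∈ I and y ∈ J, and (ii) 0 < |I| ≤ (|J| + 4)/2. Then in every 3-wise median of the election, every candidate of I is ranked before every candidate of J. -/
open Finset

/-- A ranking (strict total order) of the finite candidate set `C`, encoded as a
bijection with `Fin (Fintype.card C)`; position `0` is the top of the ranking. -/
abbrev Ranking (C : Type*) [Fintype C] := C ≃ Fin (Fintype.card C)

section Defs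

variable {C : Type*} [Fintype C] [DecidableEq C]

/-- `x` is ranked (strictly) before `y` in the ranking `π`. -/
def Before (π : Ranking C) (x y : C) : Prop := π x < π y

instance (π : Ranking C) (x y : C) : Decidable (Before π x y) :=
  inferInstanceAs (Decidable (π x < π y))

instance : DecidableEq (Ranking C) := fun a b =>
  decidable_of_iff (∀ i, a i = b i) Equiv.ext_iff.symm

/-- The top-ranked element of `S ⊆ C` according to `π` (`⊤` if `S = ∅`). -/
def topS (π : Ranking C) (S : Finset C) : WithTop C :=
  (S.image π).min.map (fun i => π.symm i)

/-- The `k`-wise Kendall-tau distance between two rankings: the number of subsets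
`S ⊆ C` with `|S| ≤ k` on whose top element the two rankings disagree (subsets of
size at most one never contribute). -/
def kDist (k : ℕ) (π σ : Ranking C) : ℕ :=
  ((Finset.univ : Finset C).powerset.filter
    (fun S => S.card ≤ k ∧ topS π S ≠ topS σ S)).card

/-- The `k`-wise Kendall-tau distance from a ranking to a voting profile. -/
def kDistV (k : ℕ) (π : Ranking C) (V : Multiset (Ranking C)) : ℕ :=
  (V.map (fun σ => kDist k π σ)).sum

/-- `π` is a `k`-wise median (for `k = 2`: a Kemeny ranking) of the profile `V`. -/
def IsKMedian (k : ℕ) (V : Multiset (Ranking C)) (π : Ranking C) : Prop :=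
  ∀ σ : Ranking C, kDistV k π V ≤ kDistV k σ V

/-- The number of votes of `V` in which `x` is ranked before `y`. -/
def votesBefore (V : Multiset (Ranking C)) (x y : C) : ℕ :=
  Multiset.card (V.filter (fun v => Before v x y))

/-- `x ≥ₛ y` : `x` is ranked before `y` in at least `s·|V|` of the votes. -/
def AtLeastRatio (V : Multiset (Ranking C)) (s : ℝ) (x y : C) : Prop :=
  s * (Multiset.card V : ℝ) ≤ (votesBefore V x y : ℝ)

/-- `x >ₛ y` : `x` is ranked before `y` in more than `s·|V|` of the votes. -/
def MoreThanRatio (V : Multiset (Ranking C)) (s : ℝ) (x y : C) : Prop :=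
  s * (Multiset.card V : ℝ) < (votesBefore V x y : ℝ)

noncomputable instance (V : Multiset (Ranking C)) (s : ℝ) (x y : C) :
    Decidable (AtLeastRatio V s x y) :=
  inferInstanceAs (Decidable (s * (Multiset.card V : ℝ) ≤ (votesBefore V x y : ℝ)))

/-- `x` is a non-dirty candidate w.r.t. threshold `s`. -/
def NonDirty (V : Multiset (Ranking C)) (s : ℝ) (x : C) : Prop :=
  ∀ y : C, y ≠ x → AtLeastRatio V s x y ∨ AtLeastRatio V s y x

/-- `x` is ranked first (is the winner) in the ranking `π`. -/
def RankedFirst (π : Ranking C) (x : C) : Prop :=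
  ∀ y : C, y ≠ x → Before π x y

instance (π : Ranking C) (x : C) : Decidable (RankedFirst π x) :=
  inferInstanceAs (Decidable (∀ y : C, y ≠ x → Before π x y))

end Defs

set_option linter.unusedSectionVars false

section Aux
variable {C : Type*} [Fintype C] [DecidableEq C]

lemma topS_eq_coe {π : Ranking C} {S : Finset C} {z : C} :
    topS π S = (z : WithTop C) ↔ z ∈ S ∧ ∀ w ∈ S, π z ≤ π w := by
  unfold topS
  constructor
  · intro h
    obtain ⟨a, ha, hmap⟩ := Option.map_eq_some_iff.1 h
    have haimg : a ∈ S.image π := Finset.mem_of_min ha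
    obtain ⟨w, hw, rfl⟩ := Finset.mem_image.1 haimg
    have hz : z = w := by simpa using hmap.symm
    subst hz
    refine ⟨hw, fun u hu => ?_⟩
    have := Finset.min_le (Finset.mem_image_of_mem π hu)
    rw [ha] at this
    exact WithTop.coe_le_coe.1 this
  · rintro ⟨hz, hle⟩
    have h1 : (S.image π).min = (π z : WithTop (Fin (Fintype.card C))) := by
      apply le_antisymm
      · exact Finset.min_le (Finset.mem_image_of_mem π hz)
      · apply Finset.le_min
        intro b hb
        obtain ⟨w, hw, rfl⟩ := Finset.mem_image.1 hb
        exact_mod_cast hle w hw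
    rw [h1]
    simp

lemma topS_exists {π : Ranking C} {S : Finset C} (h : S.Nonempty) :
    ∃ t ∈ S, topS π S = (t : WithTop C) ∧ ∀ w ∈ S, π t ≤ π w := by
  obtain ⟨a, ha⟩ := Finset.min_of_nonempty (h.image π)
  obtain ⟨t, ht, rfl⟩ := Finset.mem_image.1 (Finset.mem_of_min ha)
  refine ⟨t, ht, ?_, ?_⟩
  · unfold topS; rw [ha]; simp
  · intro w hw
    have := Finset.min_le (Finset.mem_image_of_mem π hw)
    rw [ha] at this
    exact WithTop.coe_le_coe.1 this

lemma topS_of_beats {v : Ranking C} {S : Finset C} {x : C}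
    (hx : x ∈ S) (hb : ∀ w ∈ S, w ≠ x → Before v x w) :
    topS v S = (x : WithTop C) := by
  refine topS_eq_coe.2 ⟨hx, fun w hw => ?_⟩
  rcases eq_or_ne w x with rfl | hne
  · exact le_rfl
  · exact le_of_lt (hb w hw hne)

lemma topS_ne_of_before {v : Ranking C} {S : Finset C} {x t : C}
    (hx : x ∈ S) (hb : Before v x t) : topS v S ≠ (t : WithTop C) := by
  intro h
  have := (topS_eq_coe.1 h).2 x hx
  exact absurd hb (not_lt.2 this)

lemma topS_empty (π : Ranking C) : topS π (∅ : Finset C) = ⊤ := by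
  simp [topS]

def cost (V : Multiset (Ranking C)) (π : Ranking C) (S : Finset C) : ℕ :=
  Multiset.card (V.filter fun v => topS π S ≠ topS v S)

lemma msum_swap {β : Type*} [DecidableEq β] (V : Multiset (Ranking C)) (A : Finset β)
    (f : β → Ranking C → ℕ) :
    (V.map (fun v => ∑ S ∈ A, f S v)).sum = ∑ S ∈ A, (V.map (f S)).sum := by
  induction V using Multiset.induction_on with
  | empty => simp
  | cons v V ih => simp [ih, Finset.sum_add_distrib]

lemma msum_ite {p : Ranking C → Prop} [DecidablePred p] (V : Multiset (Ranking C)) :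
    (V.map (fun v => if p v then 1 else 0)).sum = Multiset.card (V.filter p) := by
  induction V using Multiset.induction_on with
  | empty => simp
  | cons v V ih =>
    by_cases h : p v <;> simp [Multiset.filter_cons, h, ih, add_comm]

lemma kDistV_eq_sum (k : ℕ) (π : Ranking C) (V : Multiset (Ranking C)) :
    kDistV k π V =
      ∑ S ∈ (Finset.univ : Finset C).powerset.filter (fun S => S.card ≤ k),
        cost V π S := by
  unfold kDistV kDist cost
  have h1 : ∀ σ : Ranking C,
      (((Finset.univ : Finset C).powerset.filter
        (fun S => S.card ≤ k ∧ topS π S ≠ topS σ S)).card)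
      = ∑ S ∈ (Finset.univ : Finset C).powerset.filter (fun S => S.card ≤ k),
          (if topS π S ≠ topS σ S then 1 else 0) := by
    intro σ
    rw [← Finset.filter_filter, Finset.card_filter]
  simp_rw [h1]
  rw [msum_swap]
  congr 1
  ext S
  rw [← msum_ite]

lemma before_total {v : Ranking C} {x y : C} (hxy : x ≠ y) (h : ¬ Before v x y) :
    Before v y x := by
  unfold Before at *
  rcases lt_trichotomy (v x) (v y) with h1 | h1 | h1
  · exact absurd h1 h
  · exact absurd (v.injective (by exact h1)) hxy
  · exact h1

lemma card_filter_le_of_imp {p q : Ranking C → Prop} [DecidablePred p] [DecidablePred q]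
    (V : Multiset (Ranking C)) (h : ∀ v, p v → q v) :
    Multiset.card (V.filter p) ≤ Multiset.card (V.filter q) :=
  Multiset.card_le_card (Multiset.monotone_filter_right V h)

lemma not_before_iff {v : Ranking C} {x y : C} (hxy : x ≠ y) :
    ¬ Before v x y ↔ Before v y x := by
  constructor
  · exact before_total hxy
  · intro h hcon; exact absurd (lt_trans h hcon) (lt_irrefl _)

lemma card_filter_not_before (V : Multiset (Ranking C)) {x y : C} (hxy : x ≠ y) :
    Multiset.card (V.filter (fun v => ¬ Before v x y)) = votesBefore V y x := by
  unfold votesBefore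
  congr 1
  exact Multiset.filter_congr (fun v _ => not_before_iff hxy)

lemma votes_add {x y : C} (hxy : x ≠ y) (V : Multiset (Ranking C)) :
    votesBefore V x y + votesBefore V y x = Multiset.card V := by
  unfold votesBefore
  have : ∀ v : Ranking C, Before v y x ↔ ¬ Before v x y := by
    intro v
    constructor
    · intro h hcon; exact absurd (lt_trans h hcon) (lt_irrefl _)
    · exact before_total hxy
  rw [Multiset.filter_congr (fun v _ => this v)]
  have := Multiset.filter_add_not (fun v => Before v x y) V
  rw [← Multiset.card_add, this]

lemma cost_lower {π : Ranking C} {S : Finset C} {t x : C} (V : Multiset (Ranking C))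
    (ht : topS π S = (t : WithTop C)) (hx : x ∈ S) :
    votesBefore V x t ≤ cost V π S := by
  unfold votesBefore cost
  apply card_filter_le_of_imp
  intro v hv
  rw [ht]
  exact fun h => topS_ne_of_before hx hv h.symm

lemma exists_ranking_of_key (f : C → ℕ) (hf : Function.Injective f) :
    ∃ σ : Ranking C, ∀ a b : C, σ a < σ b ↔ f a < f b := by
  classical
  set s : Finset ℕ := Finset.univ.image f with hs
  have hcard : s.card = Fintype.card C := by
    rw [hs, Finset.card_image_of_injective _ hf, Finset.card_univ]
  let e := s.orderIsoOfFin hcard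
  let g : C → Fin (Fintype.card C) := fun z => e.symm ⟨f z, by simp [hs]⟩
  have hginj : Function.Injective g := by
    intro a b hab
    have := e.symm.injective hab
    exact hf (Subtype.ext_iff.1 this)
  have hgbij : Function.Bijective g :=
    (Fintype.bijective_iff_injective_and_card g).2 ⟨hginj, by simp⟩
  refine ⟨Equiv.ofBijective g hgbij, fun a b => ?_⟩
  show g a < g b ↔ f a < f b
  rw [e.symm.lt_iff_lt]
  exact Iff.rfl

lemma choose_two_mul (k : ℕ) : k.choose 2 * 2 + k = k * k := by
  induction k with
  | zero => rfl
  | succ k ih =>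
    rw [Nat.choose_succ_succ, Nat.choose_one_right]
    zify
    zify at ih
    linear_combination ih

end Aux


/-- $3/4$-Extended Condorcet criterion for the 3-wise Kemeny rule: if
`C = I ∪ J` is a partition with `x ≥_{3/4} y` for all `x ∈ I`, `y ∈ J` and
`0 < |I| ≤ (|J|+4)/2`, then in every 3-wise median every candidate of `I` is ranked
before every candidate of `J`. -/
theorem stmt10 {C : Type*} [Fintype C] [DecidableEq C]
    (V : Multiset (Ranking C)) (hV : V ≠ 0)
    (I J : Finset C) (hdisj : Disjoint I J) (hunion : I ∪ J = Finset.univ)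
    (hmaj : ∀ x ∈ I, ∀ y ∈ J, AtLeastRatio V (3 / 4) x y)
    (hI0 : 0 < I.card) (hIJ : (I.card : ℝ) ≤ ((J.card : ℝ) + 4) / 2) :
    ∀ π : Ranking C, IsKMedian 3 V π → ∀ x ∈ I, ∀ y ∈ J, Before π x y := by
  classical
  intro π hmed xh hxhI yh hyhJ
  by_contra hcon
  -- basic membership facts
  have hJI : ∀ z ∈ J, z ∉ I := fun z hz hzI => (Finset.disjoint_left.1 hdisj) hzI hz
  have hIJ' : ∀ z ∈ I, z ∉ J := fun z hz hzJ => (Finset.disjoint_left.1 hdisj) hz hzJ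
  have hmemIJ : ∀ z : C, z ∈ I ∨ z ∈ J := by
    intro z
    have : z ∈ I ∪ J := by rw [hunion]; exact Finset.mem_univ z
    exact Finset.mem_union.1 this
  have hxyne : xh ≠ yh := fun h => hIJ' xh hxhI (h ▸ hyhJ)
  have hyx : π yh < π xh := before_total hxyne hcon
  -- the unmixed ranking σ
  have hkeyinj : Function.Injective
      (fun z : C => (if z ∈ I then 0 else Fintype.card C) + (π z : ℕ)) := by
    intro a b hab
    simp only at hab
    have h1 : ((π a : ℕ)) < Fintype.card C := (π a).is_lt
    have h2 : ((π b : ℕ)) < Fintype.card C := (π b).is_lt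
    have hab' : ((π a : ℕ)) = ((π b : ℕ)) := by
      by_cases ha : a ∈ I <;> by_cases hb : b ∈ I <;> simp [ha, hb] at hab <;> omega
    exact π.injective (Fin.ext hab')
  obtain ⟨σ, hσ⟩ := exists_ranking_of_key _ hkeyinj
  have hσIJ : ∀ a ∈ I, ∀ b ∈ J, σ a < σ b := by
    intro a ha b hb
    rw [hσ]
    have h1 : ((π a : ℕ)) < Fintype.card C := (π a).is_lt
    simp only [ha, hJI b hb, if_true, if_false]
    omega
  have hσsame : ∀ a b : C, (a ∈ I ↔ b ∈ I) → (σ a < σ b ↔ π a < π b) := by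
    intro a b hiff
    rw [hσ, Fin.lt_def]
    by_cases ha : a ∈ I
    · rw [if_pos ha, if_pos (hiff.1 ha)]
      omega
    · have hb : b ∉ I := fun h => ha (hiff.2 h)
      rw [if_neg ha, if_neg hb]
      omega
  have hσle : ∀ t w : C, (t ∈ I ↔ w ∈ I) → π t ≤ π w → σ t ≤ σ w := by
    intro t w hiff hle
    rcases eq_or_ne t w with rfl | hne
    · exact le_rfl
    · have : π t < π w := lt_of_le_of_ne hle (fun h => hne (π.injective h))
      exact le_of_lt ((hσsame t w hiff).2 this)
  -- profile size
  set n := Multiset.card V with hn_def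
  have hn : 0 < n := Multiset.card_pos.2 hV
  have hnR : (0:ℝ) < (n:ℝ) := by exact_mod_cast hn
  have h34 : ∀ x ∈ I, ∀ y ∈ J, (3/4:ℝ) * (n:ℝ) ≤ (votesBefore V x y : ℝ) := by
    intro x hx y hy
    exact hmaj x hx y hy
  have hvle : ∀ x y : C, votesBefore V x y ≤ n :=
    fun x y => Multiset.card_le_card (Multiset.filter_le _ V)
  have hIJne : ∀ x ∈ I, ∀ y ∈ J, x ≠ y := fun x hx y hy h => hIJ' x hx (h ▸ hy)
  -- the family of subsets
  set SS := (Finset.univ : Finset C).powerset.filter (fun S => S.card ≤ 3) with hSS_def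
  set A := SS.filter (fun S => topS π S ≠ topS σ S) with hA_def
  -- reduce to a strict inequality of sums over A
  have hmain : ∑ S ∈ A, cost V σ S < ∑ S ∈ A, cost V π S := by
    set φ : Finset C → C := fun S =>
      if h : (S ∩ I).Nonempty then π.symm (((S ∩ I).image π).min' (h.image π)) else xh
      with hφ_def
    have hφspec : ∀ S : Finset C, ∀ h : (S ∩ I).Nonempty,
        φ S ∈ S ∩ I ∧ ∀ w ∈ S ∩ I, π (φ S) ≤ π w := by
      intro S h
      rw [hφ_def]
      simp only [dif_pos h]
      have hamem := Finset.min'_mem ((S ∩ I).image π) (h.image π)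
      obtain ⟨w, hw, hwa⟩ := Finset.mem_image.1 hamem
      constructor
      · rw [← hwa]; simpa using hw
      · intro w' hw'
        simp only [Equiv.apply_symm_apply]
        exact Finset.min'_le _ _ (Finset.mem_image_of_mem π hw')
    have hAchar : ∀ S ∈ A, S.card ≤ 3 ∧ (S ∩ I).Nonempty ∧
        ∃ t ∈ S ∩ J, topS π S = (t : WithTop C) ∧ ∀ w ∈ S, π t ≤ π w := by
      intro S hS
      obtain ⟨hS1, hne⟩ := Finset.mem_filter.1 hS
      have hcard : S.card ≤ 3 := (Finset.mem_filter.1 hS1).2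
      have hSne : S.Nonempty := by
        rcases Finset.eq_empty_or_nonempty S with rfl | h
        · exact absurd (by rw [topS_empty, topS_empty]) hne
        · exact h
      obtain ⟨t, htS, htop, hmin⟩ := topS_exists (π := π) hSne
      have htJ : t ∈ J := by
        by_contra htJ
        have htI : t ∈ I := (hmemIJ t).resolve_right htJ
        have : topS σ S = (t : WithTop C) := by
          refine topS_eq_coe.2 ⟨htS, fun w hw => ?_⟩
          rcases hmemIJ w with hwI | hwJ
          · exact hσle t w (iff_of_true htI hwI) (hmin w hw)
          · exact le_of_lt (hσIJ t htI w hwJ)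
        exact hne (htop.trans this.symm)
      have hSI : (S ∩ I).Nonempty := by
        by_contra h
        have hallJ : ∀ w ∈ S, w ∈ J := by
          intro w hw
          rcases hmemIJ w with hwI | hwJ
          · exact absurd ⟨w, Finset.mem_inter.2 ⟨hw, hwI⟩⟩ h
          · exact hwJ
        have : topS σ S = (t : WithTop C) := by
          refine topS_eq_coe.2 ⟨htS, fun w hw => ?_⟩
          exact hσle t w (iff_of_false (hJI t htJ) (hJI w (hallJ w hw))) (hmin w hw)
        exact hne (htop.trans this.symm)
      exact ⟨hcard, hSI, t, Finset.mem_inter.2 ⟨htS, htJ⟩, htop, hmin⟩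
    have hmaps : ∀ S ∈ A, φ S ∈ I := fun S hS =>
      (Finset.mem_inter.1 ((hφspec S (hAchar S hS).2.1).1)).2
    have hfiber : ∀ x ∈ I,
        (∑ S ∈ A.filter (fun S => φ S = x), ((cost V σ S : ℝ) - (cost V π S : ℝ))) ≤ 0 ∧
        ((∃ y ∈ J, π y < π x) →
          (∑ S ∈ A.filter (fun S => φ S = x), ((cost V σ S : ℝ) - (cost V π S : ℝ))) < 0) := by
      intro x hxI
      set Jx := J.filter (fun y => π y < π x) with hJx_def
      set Ex := I.filter (fun x' => π x < π x') with hEx_def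
      set Bx := (J.powersetCard 2).filter (fun T => ∃ y ∈ T, π y < π x) with hBx_def
      set P1 := Jx.image (fun y => ({x, y} : Finset C)) with hP1_def
      set P2 := (Jx ×ˢ Ex).image (fun q => ({x, q.2, q.1} : Finset C)) with hP2_def
      set P3 := Bx.image (insert x) with hP3_def
      have hJxmem : ∀ y ∈ Jx, y ∈ J ∧ π y < π x ∧ y ∉ I ∧ y ≠ x := by
        intro y hy
        have h1 := Finset.mem_filter.1 hy
        exact ⟨h1.1, h1.2, hJI y h1.1, fun h => (hJI y h1.1) (h ▸ hxI)⟩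
      have hExmem : ∀ x' ∈ Ex, x' ∈ I ∧ π x < π x' ∧ x' ≠ x := by
        intro x' hx'
        have h1 := Finset.mem_filter.1 hx'
        exact ⟨h1.1, h1.2, fun h => absurd h1.2 (by rw [h]; exact lt_irrefl _)⟩
      have hBxmem : ∀ T ∈ Bx, T ⊆ J ∧ T.card = 2 ∧ (∃ y ∈ T, π y < π x) ∧ x ∉ T := by
        intro T hT
        have h1 := Finset.mem_filter.1 hT
        have h2 := Finset.mem_powersetCard.1 h1.1
        exact ⟨h2.1, h2.2, h1.2, fun hx => hIJ' x hxI (h2.1 hx)⟩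
      -- top computations
      have hxment : ∀ S : Finset C, x ∈ insert x S := fun S => Finset.mem_insert_self x S
      have htopσ_insJ : ∀ T : Finset C, T ⊆ J → topS σ (insert x T) = (x : WithTop C) := by
        intro T hTJ
        refine topS_of_beats (hxment T) (fun w hw hwx => ?_)
        rcases Finset.mem_insert.1 hw with rfl | hwT
        · exact absurd rfl hwx
        · exact hσIJ x hxI w (hTJ hwT)
      have htopπ_pair : ∀ y ∈ Jx, topS π ({x, y} : Finset C) = (y : WithTop C) := by
        intro y hy
        obtain ⟨hyJ, hyx, _, hyne⟩ := hJxmem y hy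
        refine topS_of_beats (Finset.mem_insert_of_mem (Finset.mem_singleton_self y))
          (fun w hw hwy => ?_)
        rcases Finset.mem_insert.1 hw with rfl | hw'
        · exact hyx
        · exact absurd (Finset.mem_singleton.1 hw') hwy
      have htopπ_tri21 : ∀ y ∈ Jx, ∀ x' ∈ Ex,
          topS π ({x, x', y} : Finset C) = (y : WithTop C) := by
        intro y hy x' hx'
        obtain ⟨hyJ, hyx, _, hyne⟩ := hJxmem y hy
        obtain ⟨hx'I, hxx', hx'x⟩ := hExmem x' hx'
        refine topS_of_beats (by simp) (fun w hw hwy => ?_)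
        rcases Finset.mem_insert.1 hw with rfl | hw'
        · exact hyx
        rcases Finset.mem_insert.1 hw' with rfl | hw''
        · exact lt_trans hyx hxx'
        · exact absurd (Finset.mem_singleton.1 hw'') hwy
      have htopσ_tri21 : ∀ y ∈ Jx, ∀ x' ∈ Ex,
          topS σ ({x, x', y} : Finset C) = (x : WithTop C) := by
        intro y hy x' hx'
        obtain ⟨hyJ, hyx, _, hyne⟩ := hJxmem y hy
        obtain ⟨hx'I, hxx', hx'x⟩ := hExmem x' hx'
        refine topS_of_beats (by simp) (fun w hw hwx => ?_)
        rcases Finset.mem_insert.1 hw with rfl | hw'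
        · exact absurd rfl hwx
        rcases Finset.mem_insert.1 hw' with rfl | hw''
        · exact (hσsame x w (iff_of_true hxI hx'I)).2 hxx'
        · rw [Finset.mem_singleton.1 hw'']
          exact hσIJ x hxI y hyJ
      -- S ∩ I computations and φ values
      have hSIins : ∀ T : Finset C, T ⊆ J → (insert x T) ∩ I = {x} := by
        intro T hTJ
        ext w
        simp only [Finset.mem_inter, Finset.mem_insert, Finset.mem_singleton]
        constructor
        · rintro ⟨rfl | hwT, hwI⟩
          · rfl
          · exact absurd hwI (hJI w (hTJ hwT))
        · rintro rfl
          exact ⟨Or.inl rfl, hxI⟩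
      have hφeq : ∀ S : Finset C, S ∩ I = {x} → φ S = x := by
        intro S hSI
        have hne : (S ∩ I).Nonempty := by rw [hSI]; exact ⟨x, Finset.mem_singleton_self x⟩
        have := (hφspec S hne).1
        rw [hSI] at this
        exact Finset.mem_singleton.1 this
      have hφpair : ∀ y ∈ Jx, φ ({x, y} : Finset C) = x := by
        intro y hy
        obtain ⟨hyJ, _, _, _⟩ := hJxmem y hy
        apply hφeq
        have : ({x, y} : Finset C) = insert x {y} := rfl
        rw [this]
        apply hSIins
        intro w hw
        rw [Finset.mem_singleton.1 hw]
        exact hyJ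
      have hφtri12 : ∀ T ∈ Bx, φ (insert x T) = x := by
        intro T hT
        exact hφeq _ (hSIins T (hBxmem T hT).1)
      have hSI21 : ∀ y ∈ Jx, ∀ x' ∈ Ex, ({x, x', y} : Finset C) ∩ I = {x, x'} := by
        intro y hy x' hx'
        obtain ⟨hyJ, _, hynI, _⟩ := hJxmem y hy
        obtain ⟨hx'I, _, _⟩ := hExmem x' hx'
        ext w
        simp only [Finset.mem_inter, Finset.mem_insert, Finset.mem_singleton]
        constructor
        · rintro ⟨rfl | rfl | rfl, hwI⟩
          · exact Or.inl rfl
          · exact Or.inr rfl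
          · exact absurd hwI hynI
        · rintro (rfl | rfl)
          · exact ⟨Or.inl rfl, hxI⟩
          · exact ⟨Or.inr (Or.inl rfl), hx'I⟩
      have hφtri21 : ∀ y ∈ Jx, ∀ x' ∈ Ex, φ ({x, x', y} : Finset C) = x := by
        intro y hy x' hx'
        obtain ⟨hx'I, hxx', hx'x⟩ := hExmem x' hx'
        have hSI := hSI21 y hy x' hx'
        have hne : (({x, x', y} : Finset C) ∩ I).Nonempty := by
          rw [hSI]; exact ⟨x, by simp⟩
        obtain ⟨hmem, hminφ⟩ := hφspec _ hne
        rw [hSI] at hmem hminφ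
        rcases Finset.mem_insert.1 hmem with h | h
        · exact h
        · rw [Finset.mem_singleton.1 h] at hminφ ⊢
          have := hminφ x (Finset.mem_insert_self x _)
          exact absurd hxx' (not_lt.2 this)
      have hcard_pair : ∀ y ∈ Jx, ({x, y} : Finset C).card = 2 := by
        intro y hy
        rw [Finset.card_insert_of_notMem (by
          rw [Finset.mem_singleton]; exact fun h => (hJxmem y hy).2.2.2 h.symm)]
        simp
      have hcard_tri : ∀ q ∈ Jx ×ˢ Ex, ({x, q.2, q.1} : Finset C).card = 3 := by
        intro q hq
        have hq' := Finset.mem_product.1 hq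
        obtain ⟨hyJ, hyx2, hynI, hyne⟩ := hJxmem q.1 hq'.1
        obtain ⟨hx'I, hxx', hx'x⟩ := hExmem q.2 hq'.2
        have h1 : q.2 ∉ ({q.1} : Finset C) := by
          rw [Finset.mem_singleton]; exact fun h => hynI (h ▸ hx'I)
        have h2 : x ∉ ({q.2, q.1} : Finset C) := by
          simp only [Finset.mem_insert, Finset.mem_singleton]
          rintro (rfl | rfl)
          · exact absurd hxx' (lt_irrefl _)
          · exact hynI hxI
        rw [Finset.card_insert_of_notMem h2, Finset.card_insert_of_notMem h1]
        simp
      have hcard_ins : ∀ T ∈ Bx, (insert x T).card = 3 := by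
        intro T hT
        obtain ⟨hTJ, hT2, _, hxT⟩ := hBxmem T hT
        rw [Finset.card_insert_of_notMem hxT, hT2]
      -- the fiber decomposition
      have hAmem_iff : ∀ S : Finset C, S ∈ A ↔ S.card ≤ 3 ∧ topS π S ≠ topS σ S := by
        intro S
        rw [hA_def, Finset.mem_filter, hSS_def, Finset.mem_filter, Finset.mem_powerset]
        constructor
        · rintro ⟨⟨_, h1⟩, h2⟩; exact ⟨h1, h2⟩
        · rintro ⟨h1, h2⟩; exact ⟨⟨Finset.subset_univ _, h1⟩, h2⟩
      have hfib : A.filter (fun S => φ S = x) = (P1 ∪ P2) ∪ P3 := by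
        ext S
        rw [Finset.mem_filter, Finset.mem_union, Finset.mem_union]
        constructor
        · rintro ⟨hSA, hφx⟩
          obtain ⟨hcard3, hSI, t, htSJ, htop, hmin⟩ := hAchar S hSA
          obtain ⟨htS, htJ⟩ := Finset.mem_inter.1 htSJ
          obtain ⟨hφmem0, hφmin⟩ := hφspec S hSI
          rw [hφx] at hφmem0 hφmin
          have hxS : x ∈ S := (Finset.mem_inter.1 hφmem0).1
          have htx : π t < π x := by
            have hle := hmin x hxS
            have hne : t ≠ x := fun h => hJI t htJ (h ▸ hxI)
            exact lt_of_le_of_ne hle (fun h => hne (π.injective h))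
          have htJx : t ∈ Jx := Finset.mem_filter.2 ⟨htJ, htx⟩
          have hSsplit : S ∩ I ∪ S ∩ J = S := by
            rw [← Finset.inter_union_distrib_left, hunion, Finset.inter_univ]
          have hdisjS : Disjoint (S ∩ I) (S ∩ J) :=
            hdisj.mono Finset.inter_subset_right Finset.inter_subset_right
          have hcards : (S ∩ I).card + (S ∩ J).card = S.card := by
            rw [← Finset.card_union_of_disjoint hdisjS, hSsplit]
          have hI1 : 1 ≤ (S ∩ I).card := Finset.card_pos.2 hSI
          have hJ1 : 1 ≤ (S ∩ J).card := Finset.card_pos.2 ⟨t, htSJ⟩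
          rcases (by omega : (S ∩ I).card = 1 ∨ (S ∩ I).card = 2) with hI1' | hI2'
          · have hSIeq : S ∩ I = {x} := by
              obtain ⟨a, ha⟩ := Finset.card_eq_one.1 hI1'
              rw [ha] at hφmem0 ⊢
              rw [Finset.mem_singleton.1 hφmem0]
            rcases (by omega : (S ∩ J).card = 1 ∨ (S ∩ J).card = 2) with hJ1' | hJ2'
            · left; left
              refine Finset.mem_image.2 ⟨t, htJx, ?_⟩
              have hSJeq : S ∩ J = {t} := by
                obtain ⟨a, ha⟩ := Finset.card_eq_one.1 hJ1'
                rw [ha] at htSJ ⊢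
                rw [Finset.mem_singleton.1 htSJ]
              show ({x, t} : Finset C) = S
              ext w
              simp only [Finset.mem_insert, Finset.mem_singleton]
              constructor
              · rintro (rfl | rfl)
                · exact hxS
                · exact htS
              · intro hwS
                rcases hmemIJ w with hwI | hwJ
                · left
                  have hm : w ∈ S ∩ I := Finset.mem_inter.2 ⟨hwS, hwI⟩
                  rw [hSIeq] at hm
                  exact Finset.mem_singleton.1 hm
                · right
                  have hm : w ∈ S ∩ J := Finset.mem_inter.2 ⟨hwS, hwJ⟩
                  rw [hSJeq] at hm
                  exact Finset.mem_singleton.1 hm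
            · right
              refine Finset.mem_image.2 ⟨S ∩ J, ?_, ?_⟩
              · exact Finset.mem_filter.2 ⟨Finset.mem_powersetCard.2
                  ⟨Finset.inter_subset_right, hJ2'⟩, ⟨t, htSJ, htx⟩⟩
              · ext w
                simp only [Finset.mem_insert, Finset.mem_inter]
                constructor
                · rintro (rfl | ⟨hwS, _⟩)
                  · exact hxS
                  · exact hwS
                · intro hwS
                  rcases hmemIJ w with hwI | hwJ
                  · left
                    have hm : w ∈ S ∩ I := Finset.mem_inter.2 ⟨hwS, hwI⟩
                    rw [hSIeq] at hm
                    exact Finset.mem_singleton.1 hm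
                  · right; exact ⟨hwS, hwJ⟩
          · obtain ⟨a, b, hab, hab2⟩ := Finset.card_eq_two.1 hI2'
            have hxmem : x ∈ ({a, b} : Finset C) := hab2 ▸ hφmem0
            have hJ1' : (S ∩ J).card = 1 := by omega
            have hSJeq : S ∩ J = {t} := by
              obtain ⟨c, hc⟩ := Finset.card_eq_one.1 hJ1'
              rw [hc] at htSJ ⊢
              rw [Finset.mem_singleton.1 htSJ]
            have hx' : ∃ x', x' ∈ Ex ∧ S ∩ I = {x, x'} := by
              rcases Finset.mem_insert.1 hxmem with rfl | hxb
              · refine ⟨b, ?_, hab2⟩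
                have hbSI : b ∈ S ∩ I := hab2 ▸ (by simp)
                have hbI := (Finset.mem_inter.1 hbSI).2
                have hle := hφmin b hbSI
                exact Finset.mem_filter.2 ⟨hbI,
                  lt_of_le_of_ne hle (fun h => hab (π.injective h))⟩
              · have hxb' : x = b := Finset.mem_singleton.1 hxb
                subst hxb'
                refine ⟨a, ?_, by rw [hab2]; exact Finset.pair_comm a x⟩
                have haSI : a ∈ S ∩ I := hab2 ▸ (by simp)
                have haI := (Finset.mem_inter.1 haSI).2
                have hle := hφmin a haSI
                exact Finset.mem_filter.2 ⟨haI,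
                  lt_of_le_of_ne hle (fun h => hab (π.injective h.symm))⟩
            obtain ⟨x', hx'Ex, hSIeq⟩ := hx'
            left; right
            refine Finset.mem_image.2 ⟨(t, x'), Finset.mem_product.2 ⟨htJx, hx'Ex⟩, ?_⟩
            show ({x, x', t} : Finset C) = S
            have hx'S : x' ∈ S := by
              have : x' ∈ S ∩ I := by rw [hSIeq]; simp
              exact (Finset.mem_inter.1 this).1
            ext w
            simp only [Finset.mem_insert, Finset.mem_singleton]
            constructor
            · rintro (rfl | rfl | rfl)
              · exact hxS
              · exact hx'S
              · exact htS
            · intro hwS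
              rcases hmemIJ w with hwI | hwJ
              · have hm : w ∈ S ∩ I := Finset.mem_inter.2 ⟨hwS, hwI⟩
                rw [hSIeq] at hm
                rcases Finset.mem_insert.1 hm with rfl | hm'
                · exact Or.inl rfl
                · exact Or.inr (Or.inl (Finset.mem_singleton.1 hm'))
              · have hm : w ∈ S ∩ J := Finset.mem_inter.2 ⟨hwS, hwJ⟩
                rw [hSJeq] at hm
                exact Or.inr (Or.inr (Finset.mem_singleton.1 hm))
        · rintro ((h1 | h2) | h3)
          · obtain ⟨y, hy, rfl⟩ := Finset.mem_image.1 h1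
            obtain ⟨hyJ, hyx2, hynI, hyne⟩ := hJxmem y hy
            refine ⟨(hAmem_iff _).2 ⟨?_, ?_⟩, hφpair y hy⟩
            · rw [hcard_pair y hy]; omega
            · have hyJ' : ({y} : Finset C) ⊆ J := by
                intro w hw; rw [Finset.mem_singleton.1 hw]; exact hyJ
              rw [htopπ_pair y hy, htopσ_insJ {y} hyJ']
              intro h
              exact hyne (by exact_mod_cast h)
          · obtain ⟨q, hq, rfl⟩ := Finset.mem_image.1 h2
            have hq' := Finset.mem_product.1 hq
            obtain ⟨hyJ, hyx2, hynI, hyne⟩ := hJxmem q.1 hq'.1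
            refine ⟨(hAmem_iff _).2 ⟨?_, ?_⟩, hφtri21 q.1 hq'.1 q.2 hq'.2⟩
            · rw [hcard_tri q hq]
            · rw [htopπ_tri21 q.1 hq'.1 q.2 hq'.2, htopσ_tri21 q.1 hq'.1 q.2 hq'.2]
              intro h
              exact hyne (by exact_mod_cast h)
          · obtain ⟨T, hT, rfl⟩ := Finset.mem_image.1 h3
            obtain ⟨hTJ, hT2, ⟨y0, hy0T, hy0x⟩, hxT⟩ := hBxmem T hT
            refine ⟨(hAmem_iff _).2 ⟨?_, ?_⟩, hφtri12 T hT⟩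
            · rw [hcard_ins T hT]
            · rw [htopσ_insJ T hTJ]
              intro h
              have := (topS_eq_coe.1 h).2 y0 (Finset.mem_insert_of_mem hy0T)
              exact absurd hy0x (not_lt.2 this)
      -- cardinalities
      have hcardP1 : P1.card = Jx.card := by
        rw [hP1_def]
        apply Finset.card_image_of_injOn
        intro y1 h1 y2 h2 heq
        have heq' : ({x, y1} : Finset C) = ({x, y2} : Finset C) := heq
        have hm : y1 ∈ ({x, y2} : Finset C) := by rw [← heq']; simp
        rcases Finset.mem_insert.1 hm with h | h
        · exact absurd h (hJxmem y1 h1).2.2.2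
        · exact Finset.mem_singleton.1 h
      have hcardP2 : P2.card = Jx.card * Ex.card := by
        rw [hP2_def, Finset.card_image_of_injOn, Finset.card_product]
        intro q1 h1 q2 h2 heq
        have heq' : ({x, q1.2, q1.1} : Finset C) = ({x, q2.2, q2.1} : Finset C) := heq
        have hq1 := Finset.mem_product.1 h1
        have hq2 := Finset.mem_product.1 h2
        obtain ⟨hyJ1, hyx1, hynI1, hyne1⟩ := hJxmem q1.1 hq1.1
        obtain ⟨hyJ2, hyx2', hynI2, hyne2⟩ := hJxmem q2.1 hq2.1
        obtain ⟨hx'I1, hxx'1, hx'x1⟩ := hExmem q1.2 hq1.2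
        obtain ⟨hx'I2, hxx'2, hx'x2⟩ := hExmem q2.2 hq2.2
        have hy : q1.1 = q2.1 := by
          have hm : q1.1 ∈ ({x, q2.2, q2.1} : Finset C) := by rw [← heq']; simp
          rcases Finset.mem_insert.1 hm with h | h
          · exact absurd h hyne1
          rcases Finset.mem_insert.1 h with h' | h'
          · exact absurd (h' ▸ hx'I2) hynI1
          · exact Finset.mem_singleton.1 h'
        have hx' : q1.2 = q2.2 := by
          have hm : q1.2 ∈ ({x, q2.2, q2.1} : Finset C) := by rw [← heq']; simp
          rcases Finset.mem_insert.1 hm with h | h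
          · exact absurd h hx'x1
          rcases Finset.mem_insert.1 h with h' | h'
          · exact h'
          · exact absurd ((Finset.mem_singleton.1 h') ▸ hx'I1) hynI2
        exact Prod.ext hy hx'
      have hcardP3 : P3.card = Bx.card := by
        rw [hP3_def]
        apply Finset.card_image_of_injOn
        intro T1 h1 T2 h2 heq
        rw [← Finset.erase_insert (hBxmem T1 h1).2.2.2,
            ← Finset.erase_insert (hBxmem T2 h2).2.2.2, heq]
      -- disjointness
      have hd12 : Disjoint P1 P2 := by
        rw [Finset.disjoint_left]
        intro S hS1 hS2
        obtain ⟨y, hy, rfl⟩ := Finset.mem_image.1 hS1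
        obtain ⟨q, hq, heq⟩ := Finset.mem_image.1 hS2
        have := hcard_tri q hq
        rw [heq, hcard_pair y hy] at this
        omega
      have hd3 : Disjoint (P1 ∪ P2) P3 := by
        rw [Finset.disjoint_left]
        intro S hS1 hS3
        obtain ⟨T, hT, heqT⟩ := Finset.mem_image.1 hS3
        have hSIx : S ∩ I = {x} := by rw [← heqT]; exact hSIins T (hBxmem T hT).1
        rcases Finset.mem_union.1 hS1 with h1 | h2
        · obtain ⟨y, hy, rfl⟩ := Finset.mem_image.1 h1
          have := hcard_ins T hT
          rw [heqT, hcard_pair y hy] at this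
          omega
        · obtain ⟨q, hq, rfl⟩ := Finset.mem_image.1 h2
          have hq' := Finset.mem_product.1 hq
          have hSI2 := hSI21 q.1 hq'.1 q.2 hq'.2
          rw [hSIx] at hSI2
          obtain ⟨hx'I, hxx', hx'x⟩ := hExmem q.2 hq'.2
          have : q.2 ∈ ({x, q.2} : Finset C) := by simp
          rw [← hSI2, Finset.mem_singleton] at this
          exact hx'x this
      -- per-set bounds
      have hb1 : ∀ S ∈ P1, ((cost V σ S : ℝ) - (cost V π S : ℝ)) ≤ -((n:ℝ)/2) := by
        intro S hS
        obtain ⟨y, hy, rfl⟩ := Finset.mem_image.1 hS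
        obtain ⟨hyJ, hyx2, hynI, hyne⟩ := hJxmem y hy
        have hxy : x ≠ y := fun h => hynI (h ▸ hxI)
        have htopπ := htopπ_pair y hy
        have hyJ' : ({y} : Finset C) ⊆ J := by
          intro w hw; rw [Finset.mem_singleton.1 hw]; exact hyJ
        have htopσ : topS σ ({x, y} : Finset C) = (x : WithTop C) := htopσ_insJ {y} hyJ'
        have hxS : x ∈ ({x, y} : Finset C) := Finset.mem_insert_self x _
        have hcπ : votesBefore V x y ≤ cost V π ({x, y} : Finset C) := cost_lower V htopπ hxS
        have hcσ : cost V σ ({x, y} : Finset C) ≤ votesBefore V y x := by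
          unfold cost votesBefore
          apply card_filter_le_of_imp
          intro v hv
          by_contra hnb
          have hbxy : Before v x y := before_total (fun h => hxy h.symm) hnb
          have htv : topS v ({x, y} : Finset C) = (x : WithTop C) := by
            refine topS_of_beats hxS (fun w hw hwx => ?_)
            rcases Finset.mem_insert.1 hw with rfl | hw'
            · exact absurd rfl hwx
            · rw [Finset.mem_singleton.1 hw']; exact hbxy
          exact hv (by rw [htopσ, htv])
        have hv34 := h34 x hxI y hyJ
        have hadd := votes_add hxy V
        have hcπ' : (votesBefore V x y : ℝ) ≤ cost V π ({x, y} : Finset C) := by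
          exact_mod_cast hcπ
        have hcσ' : (cost V σ ({x, y} : Finset C) : ℝ) ≤ votesBefore V y x := by
          exact_mod_cast hcσ
        have haddR : (votesBefore V x y : ℝ) + votesBefore V y x = n := by exact_mod_cast hadd
        linarith
      have hb2 : ∀ S ∈ P2, ((cost V σ S : ℝ) - (cost V π S : ℝ)) ≤ (n:ℝ)/4 := by
        intro S hS
        obtain ⟨q, hq, rfl⟩ := Finset.mem_image.1 hS
        have hq' := Finset.mem_product.1 hq
        obtain ⟨hyJ, hyx2, hynI, hyne⟩ := hJxmem q.1 hq'.1
        have htopπ := htopπ_tri21 q.1 hq'.1 q.2 hq'.2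
        have hxS : x ∈ ({x, q.2, q.1} : Finset C) := Finset.mem_insert_self x _
        have hcπ : votesBefore V x q.1 ≤ cost V π ({x, q.2, q.1} : Finset C) :=
          cost_lower V htopπ hxS
        have hcσ : cost V σ ({x, q.2, q.1} : Finset C) ≤ n :=
          Multiset.card_le_card (Multiset.filter_le _ V)
        have hv34 := h34 x hxI q.1 hyJ
        have hcπ' : (votesBefore V x q.1 : ℝ) ≤ cost V π ({x, q.2, q.1} : Finset C) := by
          exact_mod_cast hcπ
        have hcσ' : (cost V σ ({x, q.2, q.1} : Finset C) : ℝ) ≤ n := by exact_mod_cast hcσ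
        linarith
      have hb3 : ∀ S ∈ P3, ((cost V σ S : ℝ) - (cost V π S : ℝ)) ≤ -((n:ℝ)/4) := by
        intro S hS
        obtain ⟨T, hT, rfl⟩ := Finset.mem_image.1 hS
        obtain ⟨hTJ, hT2, ⟨y0, hy0T, hy0x⟩, hxT⟩ := hBxmem T hT
        obtain ⟨a, c, hac, rfl⟩ := Finset.card_eq_two.1 hT2
        have haJ : a ∈ J := hTJ (Finset.mem_insert_self a _)
        have hcJ : c ∈ J := hTJ (Finset.mem_insert_of_mem (Finset.mem_singleton_self c))
        have hxa : x ≠ a := fun h => hIJ' x hxI (h ▸ haJ)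
        have hxc : x ≠ c := fun h => hIJ' x hxI (h ▸ hcJ)
        have htopσ := htopσ_insJ ({a, c} : Finset C) hTJ
        have hxS : x ∈ insert x ({a, c} : Finset C) := Finset.mem_insert_self x _
        obtain ⟨t, htS, htopπ, hmin⟩ := topS_exists (π := π) ⟨x, hxS⟩
        have htx : t ≠ x := by
          rintro rfl
          exact absurd (hmin y0 (Finset.mem_insert_of_mem hy0T)) (not_le.2 hy0x)
        have htJ : t ∈ J := by
          rcases Finset.mem_insert.1 htS with rfl | h'
          · exact absurd rfl htx
          rcases Finset.mem_insert.1 h' with rfl | h''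
          · exact haJ
          · rw [Finset.mem_singleton.1 h'']; exact hcJ
        have hcπ : votesBefore V x t ≤ cost V π (insert x ({a, c} : Finset C)) :=
          cost_lower V htopπ hxS
        have hcσ : cost V σ (insert x ({a, c} : Finset C))
            + Multiset.card (V.filter (fun v => Before v x c ∧ Before v x a)) ≤ n := by
          have hle1 : cost V σ (insert x ({a, c} : Finset C))
              ≤ Multiset.card (V.filter (fun v => ¬ (Before v x c ∧ Before v x a))) := by
            unfold cost
            apply card_filter_le_of_imp
            intro v hv
            rintro ⟨hbc, hba⟩
            have htv : topS v (insert x ({a, c} : Finset C)) = (x : WithTop C) := by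
              refine topS_of_beats hxS (fun w hw hwx => ?_)
              rcases Finset.mem_insert.1 hw with rfl | hw'
              · exact absurd rfl hwx
              rcases Finset.mem_insert.1 hw' with rfl | hw''
              · exact hba
              · rw [Finset.mem_singleton.1 hw'']; exact hbc
            exact hv (by rw [htopσ, htv])
          have hcards := Multiset.filter_add_not (fun v => Before v x c ∧ Before v x a) V
          have hcards' : Multiset.card (V.filter (fun v => Before v x c ∧ Before v x a))
              + Multiset.card (V.filter (fun v => ¬ (Before v x c ∧ Before v x a))) = n := by
            rw [← Multiset.card_add, hcards]
          omega
        have hsplit : votesBefore V x a =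
            Multiset.card (V.filter (fun v => Before v x c ∧ Before v x a))
            + Multiset.card (V.filter (fun v => ¬ Before v x c ∧ Before v x a)) := by
          unfold votesBefore
          rw [← Multiset.filter_filter, ← Multiset.filter_filter, ← Multiset.card_add,
              Multiset.filter_add_not]
        have h2 : Multiset.card (V.filter (fun v => ¬ Before v x c ∧ Before v x a))
            ≤ votesBefore V c x := by
          rw [← card_filter_not_before V hxc]
          exact card_filter_le_of_imp V (fun v hv => hv.1)
        have hlow : votesBefore V x a ≤
            Multiset.card (V.filter (fun v => Before v x c ∧ Before v x a))
            + votesBefore V c x := by omega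
        have hva := h34 x hxI a haJ
        have hvc := h34 x hxI c hcJ
        have hvt := h34 x hxI t htJ
        have haddc := votes_add hxc V
        have hcπR : (votesBefore V x t : ℝ) ≤ cost V π (insert x ({a, c} : Finset C)) := by
          exact_mod_cast hcπ
        have hcσR : (cost V σ (insert x ({a, c} : Finset C)) : ℝ)
            + (Multiset.card (V.filter (fun v => Before v x c ∧ Before v x a)) : ℝ) ≤ n := by
          exact_mod_cast hcσ
        have hlowR : (votesBefore V x a : ℝ) ≤
            (Multiset.card (V.filter (fun v => Before v x c ∧ Before v x a)) : ℝ)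
            + votesBefore V c x := by exact_mod_cast hlow
        have haddcR : (votesBefore V x c : ℝ) + votesBefore V c x = n := by
          exact_mod_cast haddc
        linarith
      -- the counting inequality
      have hkey : ∀ _ : 1 ≤ Jx.card, Jx.card * Ex.card < 2 * Jx.card + Bx.card := by
        intro hp
        set Jx' := J.filter (fun y => ¬ π y < π x) with hJx'_def
        have hpp' : Jx.card + Jx'.card = J.card :=
          Finset.card_filter_add_card_filter_not _
        have hJx'mem : ∀ y ∈ Jx', y ∈ J ∧ ¬ π y < π x := fun y hy => Finset.mem_filter.1 hy
        set U1 := Jx.powersetCard 2 with hU1_def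
        set U2 := (Jx ×ˢ Jx').image (fun q => ({q.1, q.2} : Finset C)) with hU2_def
        have hU1sub : U1 ⊆ Bx := by
          intro T hT
          obtain ⟨hTJx, hT2⟩ := Finset.mem_powersetCard.1 hT
          have hTJ : T ⊆ J := hTJx.trans (Finset.filter_subset _ _)
          obtain ⟨y, hyT⟩ := Finset.card_pos.1 (by rw [hT2]; norm_num : 0 < T.card)
          exact Finset.mem_filter.2 ⟨Finset.mem_powersetCard.2 ⟨hTJ, hT2⟩,
            ⟨y, hyT, (Finset.mem_filter.1 (hTJx hyT)).2⟩⟩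
        have hU2sub : U2 ⊆ Bx := by
          intro T hT
          obtain ⟨q, hq, rfl⟩ := Finset.mem_image.1 hT
          have hq' := Finset.mem_product.1 hq
          obtain ⟨hy1J, hy1x⟩ := Finset.mem_filter.1 hq'.1
          obtain ⟨hy2J, hy2x⟩ := hJx'mem q.2 hq'.2
          have hne : q.1 ≠ q.2 := fun h => hy2x (h ▸ hy1x)
          refine Finset.mem_filter.2 ⟨Finset.mem_powersetCard.2 ⟨?_, ?_⟩, ?_⟩
          · intro w hw
            rcases Finset.mem_insert.1 hw with rfl | hw'
            · exact hy1J
            · rw [Finset.mem_singleton.1 hw']; exact hy2J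
          · exact Finset.card_pair hne
          · exact ⟨q.1, Finset.mem_insert_self _ _, hy1x⟩
        have hdisjU : Disjoint U1 U2 := by
          rw [Finset.disjoint_left]
          intro T hT1 hT2
          obtain ⟨hTJx, _⟩ := Finset.mem_powersetCard.1 hT1
          obtain ⟨q, hq, heq⟩ := Finset.mem_image.1 hT2
          have hq' := Finset.mem_product.1 hq
          obtain ⟨hy2J, hy2x⟩ := hJx'mem q.2 hq'.2
          have : q.2 ∈ T := by
            rw [← heq]; exact Finset.mem_insert_of_mem (Finset.mem_singleton_self _)
          exact hy2x (Finset.mem_filter.1 (hTJx this)).2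
        have hcardU1 : U1.card = Nat.choose Jx.card 2 := by
          rw [hU1_def, Finset.card_powersetCard]
        have hcardU2 : U2.card = Jx.card * Jx'.card := by
          rw [hU2_def, Finset.card_image_of_injOn, Finset.card_product]
          intro q1 h1 q2 h2 heq
          have heq' : ({q1.1, q1.2} : Finset C) = ({q2.1, q2.2} : Finset C) := heq
          have hq1 := Finset.mem_product.1 h1
          have hq2 := Finset.mem_product.1 h2
          have hy11 := (Finset.mem_filter.1 hq1.1).2
          have hy12 := (hJx'mem q1.2 hq1.2).2
          have hy21 := (Finset.mem_filter.1 hq2.1).2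
          have hy22 := (hJx'mem q2.2 hq2.2).2
          have hfst : q1.1 = q2.1 := by
            have hm : q1.1 ∈ ({q2.1, q2.2} : Finset C) := by
              rw [← heq']; exact Finset.mem_insert_self _ _
            rcases Finset.mem_insert.1 hm with h | h
            · exact h
            · exact absurd ((Finset.mem_singleton.1 h) ▸ hy11) hy22
          have hsnd : q1.2 = q2.2 := by
            have hm : q1.2 ∈ ({q2.1, q2.2} : Finset C) := by
              rw [← heq']; exact Finset.mem_insert_of_mem (Finset.mem_singleton_self _)
            rcases Finset.mem_insert.1 hm with h | h
            · exact absurd (h ▸ hy21) hy12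
            · exact Finset.mem_singleton.1 h
          exact Prod.ext hfst hsnd
        have hble : Nat.choose Jx.card 2 + Jx.card * Jx'.card ≤ Bx.card := by
          have h1 : (U1 ∪ U2).card ≤ Bx.card :=
            Finset.card_le_card (Finset.union_subset hU1sub hU2sub)
          rw [Finset.card_union_of_disjoint hdisjU, hcardU1, hcardU2] at h1
          exact h1
        have hch := choose_two_mul Jx.card
        have he1 : Ex.card + 1 ≤ I.card := by
          have hsub : Ex ⊆ I.erase x := by
            intro x' hx'
            obtain ⟨hx'I, _, hx'x⟩ := hExmem x' hx'
            exact Finset.mem_erase.2 ⟨hx'x, hx'I⟩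
          have := Finset.card_le_card hsub
          rw [Finset.card_erase_of_mem hxI] at this
          omega
        have hlm : 2 * I.card ≤ J.card + 4 := by
          have h2 : 2 * (I.card : ℝ) ≤ (J.card : ℝ) + 4 := by linarith
          exact_mod_cast h2
        have h2e : 2 * Ex.card ≤ Jx.card + Jx'.card + 2 := by omega
        have hmul : Jx.card * (2 * Ex.card) ≤ Jx.card * (Jx.card + Jx'.card + 2) :=
          Nat.mul_le_mul_left _ h2e
        have hexp1 : Jx.card * (2 * Ex.card) = 2 * (Jx.card * Ex.card) := by ring
        have hexp2 : Jx.card * (Jx.card + Jx'.card + 2)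
            = Jx.card * Jx.card + Jx.card * Jx'.card + 2 * Jx.card := by ring
        have hble2 : Jx.card * Jx.card + 2 * (Jx.card * Jx'.card)
            ≤ 2 * Bx.card + Jx.card := by
          have := Nat.add_le_add hble hble
          omega
        linarith
      -- assembling
      have htot : ∑ S ∈ A.filter (fun S => φ S = x), ((cost V σ S : ℝ) - (cost V π S : ℝ))
          ≤ (Jx.card : ℝ) * (-((n:ℝ)/2)) + ((Jx.card : ℝ) * (Ex.card : ℝ)) * ((n:ℝ)/4)
            + (Bx.card : ℝ) * (-((n:ℝ)/4)) := by
        rw [hfib, Finset.sum_union hd3, Finset.sum_union hd12]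
        have hs1 := Finset.sum_le_card_nsmul P1 _ (-((n:ℝ)/2)) hb1
        have hs2 := Finset.sum_le_card_nsmul P2 _ ((n:ℝ)/4) hb2
        have hs3 := Finset.sum_le_card_nsmul P3 _ (-((n:ℝ)/4)) hb3
        rw [hcardP1, nsmul_eq_mul] at hs1
        rw [hcardP2, nsmul_eq_mul] at hs2
        rw [hcardP3, nsmul_eq_mul] at hs3
        push_cast at hs1 hs2 hs3
        linarith
      have hn4 : (0:ℝ) < (n:ℝ)/4 := by positivity
      constructor
      · have hle : (Jx.card : ℝ) * (Ex.card : ℝ) ≤ 2 * Jx.card + Bx.card := by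
          rcases Nat.eq_zero_or_pos Jx.card with h0 | hp
          · rw [h0]; push_cast; nlinarith [Nat.cast_nonneg (α := ℝ) Bx.card]
          · have := hkey hp
            exact_mod_cast le_of_lt (by exact_mod_cast this)
        have hm := mul_le_mul_of_nonneg_right hle (le_of_lt hn4)
        linarith
      · rintro ⟨y, hyJ, hyx2⟩
        have hp : 1 ≤ Jx.card :=
          Finset.card_pos.2 ⟨y, Finset.mem_filter.2 ⟨hyJ, hyx2⟩⟩
        have hlt : (Jx.card : ℝ) * (Ex.card : ℝ) < 2 * Jx.card + Bx.card := by
          have := hkey hp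
          push_cast
          exact_mod_cast this
        have hm := mul_lt_mul_of_pos_right hlt hn4
        linarith
    have hsub : ∑ S ∈ A, ((cost V σ S : ℝ) - (cost V π S : ℝ)) < 0 := by
      rw [← Finset.sum_fiberwise_of_maps_to hmaps
        (fun S => ((cost V σ S : ℝ) - (cost V π S : ℝ)))]
      have h0 : (0:ℝ) = ∑ _x ∈ I, (0:ℝ) := by simp
      rw [h0]
      refine Finset.sum_lt_sum (fun x hx => (hfiber x hx).1) ⟨xh, hxhI, ?_⟩
      exact (hfiber xh hxhI).2 ⟨yh, hyhJ, hyx⟩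
    rw [← Nat.cast_lt (α := ℝ), Nat.cast_sum, Nat.cast_sum]
    have := Finset.sum_sub_distrib (s := A)
      (f := fun S => (cost V σ S : ℝ)) (g := fun S => (cost V π S : ℝ))
    linarith [hsub, this]
  have hlt : kDistV 3 σ V < kDistV 3 π V := by
    rw [kDistV_eq_sum, kDistV_eq_sum]
    rw [← Finset.sum_filter_add_sum_filter_not SS (fun S => topS π S ≠ topS σ S) (cost V σ),
        ← Finset.sum_filter_add_sum_filter_not SS (fun S => topS π S ≠ topS σ S) (cost V π)]
    have heqrest : ∑ S ∈ SS.filter (fun S => ¬ topS π S ≠ topS σ S), cost V σ S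
        = ∑ S ∈ SS.filter (fun S => ¬ topS π S ≠ topS σ S), cost V π S := by
      apply Finset.sum_congr rfl
      intro S hS
      have heq : topS π S = topS σ S := not_not.1 (Finset.mem_filter.1 hS).2
      unfold cost
      rw [heq]
    rw [heqrest]
    exact Nat.add_lt_add_right hmain _
  exact absurd (hmed σ) (not_le.2 hlt)
end

section
/- There exists an election with exactly 3 candidates and a candidate x such that x ≥_{3/5} y for every other candidate y, yet x is not ranked first in some 3-wise median of the election. (Hence the smallest α such that 'x ≥_α y for all y ≠ x implies x is ranked first in every 3-wise median' for 3-candidate elections satisfies α > 3/5.) -/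
open Finset

section Ex

instance {C : Type*} [Fintype C] [DecidableEq C] (k : ℕ) (V : Multiset (Ranking C)) (π : Ranking C) :
    Decidable (IsKMedian k V π) :=
  inferInstanceAs (Decidable (∀ σ : Ranking C, kDistV k π V ≤ kDistV k σ V))

def mkR (f : Fin 3 ≃ Fin 3) : Ranking (Fin 3) := f.trans (finCongr (by simp))

def r012 : Ranking (Fin 3) := mkR ⟨![0,1,2], ![0,1,2], by decide, by decide⟩
def r102 : Ranking (Fin 3) := mkR ⟨![1,0,2], ![1,0,2], by decide, by decide⟩
def r210 : Ranking (Fin 3) := mkR ⟨![2,1,0], ![2,1,0], by decide, by decide⟩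

def Vex : Multiset (Ranking (Fin 3)) := {r012, r012, r102, r210, r210}

end Ex

/-- there is a 3-candidate election and a candidate `x` with
`x ≥_{3/5} y` for every other `y`, yet `x` is not ranked first in some 3-wise median. -/
theorem stmt13 :
    ∃ (V : Multiset (Ranking (Fin 3))) (x : Fin 3),
      V ≠ 0 ∧
      (∀ y : Fin 3, y ≠ x → AtLeastRatio V (3 / 5) x y) ∧
      ∃ π : Ranking (Fin 3), IsKMedian 3 V π ∧ ¬ RankedFirst π x := by
  refine ⟨Vex, 1, by decide, ?_, r012, by decide, by decide⟩
  intro y hy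
  have hcard : Multiset.card Vex = 5 := by decide
  have hvb : votesBefore Vex 1 y = 3 := by
    fin_cases y <;> first | decide | simp at hy
  unfold AtLeastRatio
  rw [hcard, hvb]
  norm_num
end

section
/- For every real number β with 0 < β < 2/3, there exists an election and a candidate x such that x is ranked before u in more than β·|V| votes for every other candidate u, yet x is not ranked first in any 3-wise median of the election. (Hence the smallest α such that 'x ≥_α y for all y ≠ x implies x is ranked first in every 3-wise median' satisfies 2/3 ≤ α ≤ 3/4.) -/
open Finset

namespace Stmt15Aux

def cycFun {m : ℕ} (p j : Fin m) : Fin m :=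
  if j = p then ⟨0, Nat.lt_of_le_of_lt (Nat.zero_le _) p.isLt⟩
  else if h : j.val < p.val then ⟨j.val + 1, by omega⟩ else j

def cycInv {m : ℕ} (p j : Fin m) : Fin m :=
  if j.val = 0 then p
  else if h : j.val ≤ p.val then ⟨j.val - 1, by omega⟩ else j

lemma cyc_aux {m : ℕ} (p j : Fin m) : cycInv p (cycFun p j) = j := by
  have hj := j.isLt; have hp := p.isLt
  simp only [cycFun, cycInv]
  split_ifs with h1 h2 <;>
    simp only [Fin.ext_iff, Fin.lt_def, Fin.le_def, Fin.val_mk] at * <;>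
    first
      | omega
      | simp_all
      | (simp_all; omega)

lemma cyc_aux2 {m : ℕ} (p j : Fin m) : cycFun p (cycInv p j) = j := by
  have hj := j.isLt; have hp := p.isLt
  simp only [cycFun, cycInv]
  split_ifs with h1 h2 <;>
    simp only [Fin.ext_iff, Fin.lt_def, Fin.le_def, Fin.val_mk] at * <;>
    first
      | omega
      | simp_all
      | (simp_all; omega)

def cyc {m : ℕ} (p : Fin m) : Equiv.Perm (Fin m) :=
  ⟨cycFun p, cycInv p, cyc_aux p, cyc_aux2 p⟩

lemma cyc_self_val {m : ℕ} (p : Fin m) : (cyc p p).val = 0 := by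
  simp [cyc, cycFun]

lemma cyc_mono {m : ℕ} {p j1 j2 : Fin m} (h1 : j1 ≠ p) (h2 : j2 ≠ p) (h : j1 ≤ j2) :
    cyc p j1 ≤ cyc p j2 := by
  have := j1.isLt; have := j2.isLt; have := p.isLt
  simp only [cyc, Equiv.coe_fn_mk, cycFun]
  simp only [Fin.ext_iff, Fin.lt_def, Fin.le_def, Fin.val_mk, ne_eq] at *
  split_ifs <;> (try simp only [Fin.le_def]) <;> omega

end Stmt15Aux

section TopS
variable {C : Type*} [Fintype C] [DecidableEq C]

lemma topS_eq_of {π : Ranking C} {S : Finset C} {z : C} (hz : z ∈ S)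
    (h : ∀ y ∈ S, π z ≤ π y) : topS π S = (z : WithTop C) := by
  have h1 : (S.image π).min = ((π z : Fin (Fintype.card C)) : WithTop (Fin (Fintype.card C))) := by
    apply le_antisymm
    · exact Finset.min_le (Finset.mem_image_of_mem _ hz)
    · apply Finset.le_min
      intro y hy
      obtain ⟨w, hw, rfl⟩ := Finset.mem_image.mp hy
      exact_mod_cast h w hw
  simp [topS, h1]

end TopS

def toRank {n : ℕ} (e : Equiv.Perm (Fin n)) : Ranking (Fin n) :=
  e.trans (finCongr (Fintype.card_fin n).symm)

lemma toRank_le_iff {n : ℕ} (e : Equiv.Perm (Fin n)) (y z : Fin n) :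
    toRank e y ≤ toRank e z ↔ (e y).val ≤ (e z).val := by
  simp only [toRank, Equiv.trans_apply, finCongr_apply, Fin.le_def, Fin.coe_cast]

lemma toRank_lt_iff {n : ℕ} (e : Equiv.Perm (Fin n)) (y z : Fin n) :
    toRank e y < toRank e z ↔ (e y).val < (e z).val := by
  simp only [toRank, Equiv.trans_apply, finCongr_apply, Fin.lt_def, Fin.coe_cast]

lemma before_toRank {n : ℕ} (e : Equiv.Perm (Fin n)) (y z : Fin n) :
    Before (toRank e) y z ↔ (e y).val < (e z).val := toRank_lt_iff e y z

lemma topS_toRank_eq {n : ℕ} (e : Equiv.Perm (Fin n)) {S : Finset (Fin n)} {z : Fin n}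
    (hz : z ∈ S) (h : ∀ y ∈ S, (e z).val ≤ (e y).val) :
    topS (toRank e) S = (z : WithTop (Fin n)) :=
  topS_eq_of hz (fun y hy => (toRank_le_iff e z y).mpr (h y hy))

namespace Stmt15Aux

/-! ### Concrete election -/

variable (k : ℕ)

def XX : Fin (k+2) := ⟨0, by omega⟩
def BB : Fin (k+2) := ⟨1, by omega⟩

lemma XX_ne_BB : XX k ≠ BB k := by simp [XX, BB, Fin.ext_iff]

def e2 : Equiv.Perm (Fin (k+2)) := Equiv.addLeft ⟨k, by omega⟩

lemma e2_val (j : Fin (k+2)) :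
    ((e2 k) j).val = if j.val < 2 then k + j.val else j.val - 2 := by
  have hj := j.isLt
  show ((⟨k, by omega⟩ + j : Fin (k+2))).val = _
  rw [Fin.add_def]
  simp only [Fin.val_mk]
  split_ifs with h
  · exact Nat.mod_eq_of_lt (by omega)
  · rw [Nat.mod_eq_sub_mod (by omega)]
    have : k + j.val - (k+2) = j.val - 2 := by omega
    rw [this]
    exact Nat.mod_eq_of_lt (by omega)

def v1 : Ranking (Fin (k+2)) := toRank (Equiv.refl _)
def v2 : Ranking (Fin (k+2)) := toRank (e2 k)
def v3 : Ranking (Fin (k+2)) := toRank (Equiv.swap (XX k) (BB k))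

def VV : Multiset (Ranking (Fin (k+2))) :=
  Multiset.replicate k (v1 k) + Multiset.replicate (k+2) (v2 k) +
    Multiset.replicate (k+2) (v3 k)

lemma VV_ne_zero : VV k ≠ 0 := by
  intro h
  have : Multiset.card (VV k) = 0 := by rw [h]; rfl
  simp [VV] at this

lemma card_VV : Multiset.card (VV k) = 3*k + 4 := by
  simp [VV]; ring

/-! ### Before computations -/

lemma card_filter_replicate {α : Type*} (p : α → Prop) [DecidablePred p] (n : ℕ) (a : α) :
    Multiset.card (Multiset.filter p (Multiset.replicate n a)) = if p a then n else 0 := by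
  induction n with
  | zero => simp
  | succ n ih =>
    rw [Multiset.replicate_succ, Multiset.filter_cons]
    split_ifs with h <;> simp_all

lemma votesBefore_VV (u : Fin (k+2)) (hu : u ≠ XX k) :
    votesBefore (VV k) (XX k) u = 2*k + 2 := by
  have hu0 : u.val ≠ 0 := by
    intro h; exact hu (by simp [XX, Fin.ext_iff, h])
  have huk := u.isLt
  have h1 : Before (v1 k) (XX k) u := by
    rw [v1, before_toRank]
    simpa [XX] using Nat.pos_of_ne_zero hu0
  have h2 : Before (v2 k) (XX k) u ↔ u.val < 2 := by
    rw [v2, before_toRank, e2_val, e2_val]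
    simp only [show (XX k).val = 0 from rfl]
    split_ifs with hx hy <;> omega
  have h3 : Before (v3 k) (XX k) u ↔ 2 ≤ u.val := by
    rw [v3, before_toRank, Equiv.swap_apply_left]
    rcases eq_or_ne u (BB k) with rfl | hne
    · rw [Equiv.swap_apply_right]
      simp [XX, BB]
    · rw [Equiv.swap_apply_of_ne_of_ne hu hne]
      have : u.val ≠ 1 := by
        intro h; exact hne (by simp [BB, Fin.ext_iff, h])
      simp [BB]; omega
  rw [votesBefore, VV]
  rw [Multiset.filter_add, Multiset.filter_add, Multiset.card_add, Multiset.card_add]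
  rw [card_filter_replicate, card_filter_replicate, card_filter_replicate]
  rcases lt_or_ge u.val 2 with h | h
  · rw [if_pos h1, if_pos (h2.mpr h), if_neg (by rw [h3]; omega)]; ring
  · rw [if_pos h1, if_neg (by rw [h2]; omega), if_pos (h3.mpr h)]; ring

end Stmt15Aux

namespace Stmt15Aux

variable (k : ℕ)

/-! ### topS computations for the three votes -/

lemma topS_v1_X {S : Finset (Fin (k+2))} (hX : XX k ∈ S) :
    topS (v1 k) S = (XX k : WithTop (Fin (k+2))) :=
  topS_toRank_eq _ hX (fun y _ => by simp [XX])

lemma topS_v1_B {S : Finset (Fin (k+2))} (hB : BB k ∈ S) (hX : XX k ∉ S) :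
    topS (v1 k) S = (BB k : WithTop (Fin (k+2))) := by
  apply topS_toRank_eq _ hB
  intro y hy
  have : y.val ≠ 0 := by
    intro h
    exact hX (by rwa [show XX k = y from by simp [XX, Fin.ext_iff, h.symm]])
  simp [BB]; omega

lemma topS_v3_B {S : Finset (Fin (k+2))} (hB : BB k ∈ S) :
    topS (v3 k) S = (BB k : WithTop (Fin (k+2))) := by
  apply topS_toRank_eq _ hB
  intro y hy
  rw [Equiv.swap_apply_right]
  simp [XX]

lemma topS_v2_pair :
    topS (v2 k) ({XX k, BB k} : Finset (Fin (k+2))) = (XX k : WithTop (Fin (k+2))) := by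
  apply topS_toRank_eq _ (Finset.mem_insert_self _ _)
  intro y hy
  rcases Finset.mem_insert.mp hy with rfl | hy
  · exact le_refl _
  · rw [Finset.mem_singleton.mp hy]
    simp only [e2_val, XX, BB, Fin.val_mk]
    split_ifs <;> omega

lemma topS_v2_triple {a : Fin (k+2)} (ha : 2 ≤ a.val) :
    topS (v2 k) ({XX k, BB k, a} : Finset (Fin (k+2))) = (a : WithTop (Fin (k+2))) := by
  have hak := a.isLt
  apply topS_toRank_eq _ (by simp)
  intro y hy
  simp only [Finset.mem_insert, Finset.mem_singleton] at hy
  rcases hy with rfl | rfl | rfl <;>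
    · simp only [e2_val, XX, BB, Fin.val_mk]
      split_ifs <;> omega

/-! ### topS for x-first rankings and for moveB -/

lemma topS_first {σ : Ranking (Fin (k+2))} (hx : RankedFirst σ (XX k))
    {S : Finset (Fin (k+2))} (hX : XX k ∈ S) :
    topS σ S = (XX k : WithTop (Fin (k+2))) := by
  apply topS_eq_of hX
  intro y hy
  rcases eq_or_ne y (XX k) with rfl | hne
  · exact le_refl _
  · exact (hx y hne).le

def moveB (σ : Ranking (Fin (k+2))) : Ranking (Fin (k+2)) :=
  σ.trans (cyc (σ (BB k)))

lemma topS_moveB_B (σ : Ranking (Fin (k+2))) {S : Finset (Fin (k+2))} (hB : BB k ∈ S) :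
    topS (moveB k σ) S = (BB k : WithTop (Fin (k+2))) := by
  apply topS_eq_of hB
  intro y hy
  show (cyc (σ (BB k))) (σ (BB k)) ≤ (cyc (σ (BB k))) (σ y)
  rw [Fin.le_def, cyc_self_val]
  exact Nat.zero_le _

lemma topS_moveB_of_not_mem (σ : Ranking (Fin (k+2))) {S : Finset (Fin (k+2))}
    (hB : BB k ∉ S) : topS (moveB k σ) S = topS σ S := by
  rcases S.eq_empty_or_nonempty with rfl | hS
  · rw [topS_empty, topS_empty]
  · have hne : (S.image σ).Nonempty := hS.image σ
    set j0 := (S.image σ).min' hne with hj0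
    obtain ⟨z, hz, hzj⟩ := Finset.mem_image.mp (Finset.min'_mem _ hne)
    have hmin : ∀ y ∈ S, σ z ≤ σ y := by
      intro y hy
      rw [hzj]
      exact Finset.min'_le _ _ (Finset.mem_image_of_mem _ hy)
    rw [topS_eq_of hz hmin]
    apply topS_eq_of hz
    intro y hy
    show (cyc (σ (BB k))) (σ z) ≤ (cyc (σ (BB k))) (σ y)
    apply cyc_mono _ _ (hmin y hy)
    · exact fun h => hB (σ.injective h ▸ hz)
    · exact fun h => hB (σ.injective h ▸ hy)

end Stmt15Aux

namespace Stmt15Aux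

variable (k : ℕ)

/-! ### per-set weights -/

def gg (σ : Ranking (Fin (k+2))) (S : Finset (Fin (k+2))) : ℕ :=
  k * (if S.card ≤ 3 ∧ topS σ S ≠ topS (v1 k) S then 1 else 0)
  + (k+2) * (if S.card ≤ 3 ∧ topS σ S ≠ topS (v2 k) S then 1 else 0)
  + (k+2) * (if S.card ≤ 3 ∧ topS σ S ≠ topS (v3 k) S then 1 else 0)

lemma kDist_eq_sum {C : Type*} [Fintype C] [DecidableEq C] (π σ : Ranking C) :
    kDist 3 π σ =
      ∑ S ∈ (Finset.univ : Finset C).powerset,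
        (if S.card ≤ 3 ∧ topS π S ≠ topS σ S then 1 else 0) := by
  rw [kDist, Finset.card_filter]

lemma kDistV_VV (σ : Ranking (Fin (k+2))) :
    kDistV 3 σ (VV k) = ∑ S ∈ (Finset.univ : Finset (Fin (k+2))).powerset, gg k σ S := by
  rw [kDistV, VV]
  simp only [Multiset.map_add, Multiset.sum_add, Multiset.map_replicate,
    Multiset.sum_replicate, smul_eq_mul]
  rw [kDist_eq_sum, kDist_eq_sum, kDist_eq_sum, Finset.mul_sum, Finset.mul_sum,
    Finset.mul_sum, ← Finset.sum_add_distrib, ← Finset.sum_add_distrib]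
  exact Finset.sum_congr rfl (fun S _ => rfl)

/-! ### outside A : moveB does not increase the weight -/

lemma gg_moveB_le (σ : Ranking (Fin (k+2))) {S : Finset (Fin (k+2))}
    (h : ¬(XX k ∈ S ∧ BB k ∈ S ∧ S.card ≤ 3)) :
    gg k (moveB k σ) S ≤ gg k σ S := by
  by_cases hc : S.card ≤ 3
  · by_cases hB : BB k ∈ S
    · have hX : XX k ∉ S := fun hX => h ⟨hX, hB, hc⟩
      have h1 : topS (v1 k) S = (BB k : WithTop (Fin (k+2))) := topS_v1_B k hB hX
      have h3 : topS (v3 k) S = (BB k : WithTop (Fin (k+2))) := topS_v3_B k hB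
      have hm : topS (moveB k σ) S = (BB k : WithTop (Fin (k+2))) := topS_moveB_B k σ hB
      by_cases he : topS σ S = (BB k : WithTop (Fin (k+2)))
      · unfold gg
        rw [hm, he]
      · unfold gg
        rw [hm, h1, h3]
        have hσ3 : topS σ S ≠ (BB k : WithTop (Fin (k+2))) := he
        simp only [ne_eq, not_true_eq_false, and_false, if_false, if_neg, hσ3, hc,
          true_and, if_true, not_false_eq_true, and_true]
        split_ifs <;> omega
    · have := topS_moveB_of_not_mem k σ hB
      unfold gg
      rw [this]
  · unfold gg
    simp [hc]

/-! ### the set A of small sets containing both X and B -/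

def Aset : Finset (Finset (Fin (k+2))) :=
  insert ({XX k, BB k} : Finset (Fin (k+2)))
    ((Finset.univ \ {XX k, BB k}).image (fun a => ({XX k, BB k, a} : Finset (Fin (k+2)))))

lemma card_XB : ({XX k, BB k} : Finset (Fin (k+2))).card = 2 :=
  Finset.card_pair (XX_ne_BB k)

lemma card_XBa {a : Fin (k+2)} (ha : a ∉ ({XX k, BB k} : Finset (Fin (k+2)))) :
    ({XX k, BB k, a} : Finset (Fin (k+2))).card = 3 := by
  simp only [Finset.mem_insert, Finset.mem_singleton, not_or] at ha
  rw [Finset.card_insert_of_notMem (by simp [XX_ne_BB k, Ne.symm ha.1]),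
    Finset.card_insert_of_notMem (by simp [Ne.symm ha.2]), Finset.card_singleton]

lemma filter_eq_Aset :
    ((Finset.univ : Finset (Fin (k+2))).powerset.filter
      (fun S => XX k ∈ S ∧ BB k ∈ S ∧ S.card ≤ 3)) = Aset k := by
  ext S
  simp only [Finset.mem_filter, Finset.mem_powerset, Finset.subset_univ, true_and,
    Aset, Finset.mem_insert, Finset.mem_image]
  constructor
  · rintro ⟨hX, hB, hc⟩
    have hsub : ({XX k, BB k} : Finset (Fin (k+2))) ⊆ S := by
      intro y hy
      rcases Finset.mem_insert.mp hy with rfl | hy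
      · exact hX
      · rwa [Finset.mem_singleton.mp hy]
    have hcs : (S \ {XX k, BB k}).card = S.card - 2 := by
      rw [Finset.card_sdiff_of_subset hsub, card_XB]
    have hS2 : 2 ≤ S.card := by
      calc 2 = ({XX k, BB k} : Finset (Fin (k+2))).card := (card_XB k).symm
      _ ≤ S.card := Finset.card_le_card hsub
    have hunion : ({XX k, BB k} : Finset (Fin (k+2))) ∪ (S \ {XX k, BB k}) = S :=
      Finset.union_sdiff_of_subset hsub
    rcases Nat.lt_or_ge (S \ {XX k, BB k}).card 1 with h1 | h1
    · left
      have : S \ {XX k, BB k} = ∅ := Finset.card_eq_zero.mp (by omega)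
      rw [← hunion, this, Finset.union_empty]
    · right
      have h1' : (S \ {XX k, BB k}).card = 1 := by omega
      obtain ⟨a, ha⟩ := Finset.card_eq_one.mp h1'
      have haS : a ∉ ({XX k, BB k} : Finset (Fin (k+2))) := by
        have : a ∈ S \ {XX k, BB k} := by rw [ha]; exact Finset.mem_singleton_self a
        exact (Finset.mem_sdiff.mp this).2
      refine ⟨a, Finset.mem_sdiff.mpr ⟨Finset.mem_univ a, haS⟩, ?_⟩
      rw [← hunion, ha]
      ext y
      simp only [Finset.mem_union, Finset.mem_insert, Finset.mem_singleton]
      tauto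
  · rintro (rfl | ⟨a, hmem, rfl⟩)
    · exact ⟨Finset.mem_insert_self _ _,
        Finset.mem_insert_of_mem (Finset.mem_singleton_self _), by rw [card_XB]; omega⟩
    · have ha := (Finset.mem_sdiff.mp hmem).2
      exact ⟨Finset.mem_insert_self _ _,
        Finset.mem_insert_of_mem (Finset.mem_insert_self _ _), by rw [card_XBa k ha]⟩

end Stmt15Aux

namespace Stmt15Aux

variable (k : ℕ)

lemma val_ge_two {a : Fin (k+2)} (haX : a ≠ XX k) (haB : a ≠ BB k) : 2 ≤ a.val := by
  have h0 : a.val ≠ 0 := fun h => haX (by simp [XX, Fin.ext_iff, h])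
  have h1 : a.val ≠ 1 := fun h => haB (by simp [BB, Fin.ext_iff, h])
  omega

lemma X_mem_pair : XX k ∈ ({XX k, BB k} : Finset (Fin (k+2))) := Finset.mem_insert_self _ _
lemma B_mem_pair : BB k ∈ ({XX k, BB k} : Finset (Fin (k+2))) :=
  Finset.mem_insert_of_mem (Finset.mem_singleton_self _)
lemma X_mem_triple (a : Fin (k+2)) : XX k ∈ ({XX k, BB k, a} : Finset (Fin (k+2))) :=
  Finset.mem_insert_self _ _
lemma B_mem_triple (a : Fin (k+2)) : BB k ∈ ({XX k, BB k, a} : Finset (Fin (k+2))) :=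
  Finset.mem_insert_of_mem (Finset.mem_insert_self _ _)

lemma coe_ne_XB : (XX k : WithTop (Fin (k+2))) ≠ (BB k : WithTop (Fin (k+2))) := by
  simp [XX_ne_BB k]

lemma gg_pair (σ : Ranking (Fin (k+2))) (hx : RankedFirst σ (XX k)) :
    gg k σ ({XX k, BB k} : Finset (Fin (k+2))) = k + 2 := by
  unfold gg
  rw [card_XB, topS_first k hx (X_mem_pair k), topS_v1_X k (X_mem_pair k),
    topS_v2_pair k, topS_v3_B k (B_mem_pair k)]
  simp [coe_ne_XB k]

lemma gg_pair_moveB (σ : Ranking (Fin (k+2))) :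
    gg k (moveB k σ) ({XX k, BB k} : Finset (Fin (k+2))) = 2*k + 2 := by
  unfold gg
  rw [card_XB, topS_moveB_B k σ (B_mem_pair k), topS_v1_X k (X_mem_pair k),
    topS_v2_pair k, topS_v3_B k (B_mem_pair k)]
  have := (coe_ne_XB k).symm
  simp [this]
  ring

lemma gg_triple (σ : Ranking (Fin (k+2))) (hx : RankedFirst σ (XX k))
    {a : Fin (k+2)} (ha : 2 ≤ a.val) :
    gg k σ ({XX k, BB k, a} : Finset (Fin (k+2))) = 2*k + 4 := by
  have haX : a ∉ ({XX k, BB k} : Finset (Fin (k+2))) := by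
    simp only [Finset.mem_insert, Finset.mem_singleton, not_or]
    constructor <;> (intro h; rw [h] at ha; simp [XX, BB] at ha)
  have hXa : (XX k : WithTop (Fin (k+2))) ≠ (a : WithTop (Fin (k+2))) := by
    simp only [ne_eq, WithTop.coe_eq_coe]
    intro h; rw [← h] at ha; simp [XX] at ha
  unfold gg
  rw [card_XBa k haX, topS_first k hx (X_mem_triple k a), topS_v1_X k (X_mem_triple k a),
    topS_v2_triple k ha, topS_v3_B k (B_mem_triple k a)]
  simp [coe_ne_XB k, hXa]
  ring

lemma gg_triple_moveB (σ : Ranking (Fin (k+2))) {a : Fin (k+2)} (ha : 2 ≤ a.val) :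
    gg k (moveB k σ) ({XX k, BB k, a} : Finset (Fin (k+2))) = 2*k + 2 := by
  have haX : a ∉ ({XX k, BB k} : Finset (Fin (k+2))) := by
    simp only [Finset.mem_insert, Finset.mem_singleton, not_or]
    constructor <;> (intro h; rw [h] at ha; simp [XX, BB] at ha)
  have hBa : (BB k : WithTop (Fin (k+2))) ≠ (a : WithTop (Fin (k+2))) := by
    simp only [ne_eq, WithTop.coe_eq_coe]
    intro h; rw [← h] at ha; simp [BB] at ha
  unfold gg
  rw [card_XBa k haX, topS_moveB_B k σ (B_mem_triple k a), topS_v1_X k (X_mem_triple k a),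
    topS_v2_triple k ha, topS_v3_B k (B_mem_triple k a)]
  have := (coe_ne_XB k).symm
  simp [this, hBa]
  ring

lemma sum_Aset (f : Finset (Fin (k+2)) → ℕ) :
    ∑ S ∈ Aset k, f S =
      f ({XX k, BB k} : Finset (Fin (k+2))) +
        ∑ a ∈ Finset.univ \ {XX k, BB k}, f ({XX k, BB k, a} : Finset (Fin (k+2))) := by
  rw [Aset, Finset.sum_insert, Finset.sum_image]
  · intro a1 h1 a2 h2 heq
    have ha1 : a1 ∉ ({XX k, BB k} : Finset (Fin (k+2))) := (Finset.mem_sdiff.mp h1).2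
    have : a1 ∈ ({XX k, BB k, a2} : Finset (Fin (k+2))) := by
      beta_reduce at heq; rw [← heq]; simp
    simp only [Finset.mem_insert, Finset.mem_singleton] at this ha1
    tauto
  · intro hmem
    obtain ⟨a, ha, heq⟩ := Finset.mem_image.mp hmem
    have h1 := card_XBa k (Finset.mem_sdiff.mp ha).2
    rw [heq, card_XB] at h1
    omega

lemma card_index : (Finset.univ \ ({XX k, BB k} : Finset (Fin (k+2)))).card = k := by
  rw [Finset.card_sdiff_of_subset (Finset.subset_univ _), Finset.card_univ, Fintype.card_fin, card_XB]
  omega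

lemma key (hk : 1 ≤ k) (σ : Ranking (Fin (k+2))) (hx : RankedFirst σ (XX k)) :
    kDistV 3 (moveB k σ) (VV k) < kDistV 3 σ (VV k) := by
  rw [kDistV_VV, kDistV_VV]
  have hsplit : ∀ τ : Ranking (Fin (k+2)),
      ∑ S ∈ (Finset.univ : Finset (Fin (k+2))).powerset, gg k τ S =
        ∑ S ∈ (Finset.univ : Finset (Fin (k+2))).powerset.filter
            (fun S => XX k ∈ S ∧ BB k ∈ S ∧ S.card ≤ 3), gg k τ S +
        ∑ S ∈ (Finset.univ : Finset (Fin (k+2))).powerset.filter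
            (fun S => ¬(XX k ∈ S ∧ BB k ∈ S ∧ S.card ≤ 3)), gg k τ S :=
    fun τ => (Finset.sum_filter_add_sum_filter_not _ _ _).symm
  rw [hsplit, hsplit]
  apply Nat.add_lt_add_of_lt_of_le
  · rw [filter_eq_Aset, sum_Aset, sum_Aset, gg_pair k σ hx, gg_pair_moveB k σ]
    have hm : ∑ a ∈ Finset.univ \ ({XX k, BB k} : Finset (Fin (k+2))),
        gg k (moveB k σ) ({XX k, BB k, a} : Finset (Fin (k+2))) = k * (2*k+2) := by
      rw [Finset.sum_congr rfl (fun a ha => ?_), Finset.sum_const, card_index, smul_eq_mul]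
      have h2 := (Finset.mem_sdiff.mp ha).2
      simp only [Finset.mem_insert, Finset.mem_singleton, not_or] at h2
      exact gg_triple_moveB k σ (val_ge_two k h2.1 h2.2)
    have hs : ∑ a ∈ Finset.univ \ ({XX k, BB k} : Finset (Fin (k+2))),
        gg k σ ({XX k, BB k, a} : Finset (Fin (k+2))) = k * (2*k+4) := by
      rw [Finset.sum_congr rfl (fun a ha => ?_), Finset.sum_const, card_index, smul_eq_mul]
      have h2 := (Finset.mem_sdiff.mp ha).2
      simp only [Finset.mem_insert, Finset.mem_singleton, not_or] at h2
      exact gg_triple k σ hx (val_ge_two k h2.1 h2.2)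
    rw [hm, hs]
    nlinarith [hk]
  · apply Finset.sum_le_sum
    intro S hS
    exact gg_moveB_le k σ (Finset.mem_filter.mp hS).2

end Stmt15Aux


/-- for every `0 < β < 2/3` there is an election and a candidate `x`
beating every other candidate in more than `β·|V|` of the votes yet not ranked first
in any 3-wise median. -/
theorem stmt15 (β : ℝ) (hβ0 : 0 < β) (hβ1 : β < 2 / 3) :
    ∃ (n : ℕ) (V : Multiset (Ranking (Fin n))) (x : Fin n),
      V ≠ 0 ∧
      (∀ u : Fin n, u ≠ x → MoreThanRatio V β x u) ∧
      ∀ π : Ranking (Fin n), IsKMedian 3 V π → ¬ RankedFirst π x := by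
  obtain ⟨k0, hk0⟩ := exists_nat_gt ((4*β - 2) / (2 - 3*β))
  set K : ℕ := k0 + 1 with hK
  have h23 : (0:ℝ) < 2 - 3*β := by linarith
  have hKq : (4*β - 2) / (2 - 3*β) < (K : ℝ) := by
    calc (4*β - 2) / (2 - 3*β) < (k0 : ℝ) := hk0
    _ < (K : ℝ) := by push_cast [hK]; linarith
  have hq : 4*β - 2 < (K : ℝ) * (2 - 3*β) := by
    rw [div_lt_iff₀ h23] at hKq
    exact hKq
  have hβK : β * (3*(K:ℝ) + 4) < 2*(K:ℝ) + 2 := by nlinarith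
  refine ⟨K + 2, Stmt15Aux.VV K, Stmt15Aux.XX K, Stmt15Aux.VV_ne_zero K, ?_, ?_⟩
  · intro u hu
    rw [MoreThanRatio, Stmt15Aux.card_VV, Stmt15Aux.votesBefore_VV K u hu]
    push_cast
    push_cast [hK] at hβK
    linarith
  · intro π hmed hfirst
    have h1 := Stmt15Aux.key K (by omega) π hfirst
    have h2 := hmed (Stmt15Aux.moveB K π)
    omega
end
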